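/- For every n ≥ 0, if G is a flasque inverse system of abelian groups indexed by a directed set of cofinality ℵ_n, then lim^k G = 0 for all k ≥ n+1. -/

import Mathlib

/-!
Statement 0: For any directed set Λ and Λ-inverse system of abelian groups G,
the composition of consecutive coboundary maps vanishes: δ^{n+1} ∘ δ^n = 0.
-/

universe u v

/-- A `Λ`-inverse system of abelian groups. -/
structure InvSys (Λ : Type u) [Preorder Λ] : Type (max u (v + 1)) where
  G : Λ → Type v
  inst : ∀ a, AddCommGroup (G a)
  p : ∀ {a b : Λ}, a ≤ b → G b →+ G a
  p_refl : ∀ (a : Λ) (h : a ≤ a) (x : G a), p h x = x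
  p_comp : ∀ {a b c : Λ} (hab : a ≤ b) (hbc : b ≤ c) (x : G c),
      p hab (p hbc x) = p (hab.trans hbc) x

attribute [instance] InvSys.inst

/-- `Λ^{(n)}`: the ≤-ordered `(n+1)`-tuples of `Λ`. -/
def Tup (Λ : Type u) [Preorder Λ] (n : ℕ) : Type u :=
  {f : Fin (n + 1) → Λ // Monotone f}

variable {Λ : Type u} [Preorder Λ]

/-- `G^{(n)}`: functions assigning to each tuple `λ̄ ∈ Λ^{(n)}` an element of `G_{λ_0}`. -/
def InvSys.Cochain (S : InvSys.{u, v} Λ) (n : ℕ) : Type max u v :=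
  ∀ t : Tup Λ n, S.G (t.1 0)

instance (S : InvSys.{u, v} Λ) (n : ℕ) : AddCommGroup (S.Cochain n) :=
  inferInstanceAs (AddCommGroup (∀ t : Tup Λ n, S.G (t.1 0)))

/-- The tuple `λ̄^i` obtained by omitting the `i`-th coordinate. -/
def Tup.face {n : ℕ} (t : Tup Λ (n + 1)) (i : Fin (n + 2)) : Tup Λ n :=
  ⟨t.1 ∘ i.succAbove, t.2.comp (Fin.strictMono_succAbove i).monotone⟩

/-- The coboundary map `δ^{n+1} : G^{(n)} → G^{(n+1)}`,
`δ(x)_{λ̄} = Σ_{1≤i≤n+1} (-1)^i x_{λ̄^i} + p^{λ_1}_{λ_0}(x_{λ̄^0})`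
(the `i = 0` term carries the bonding map `p^{λ_1}_{λ_0}`, and for `i ≥ 1` the bonding
map `p^{λ_0}_{λ_0}` is the identity). -/
def InvSys.coboundary (S : InvSys.{u, v} Λ) (n : ℕ) (x : S.Cochain n) : S.Cochain (n + 1) :=
  fun t => ∑ i : Fin (n + 2),
    ((-1 : ℤ) ^ (i : ℕ)) • S.p (t.2 (Fin.zero_le (i.succAbove 0))) (x (t.face i))


/-- The cofinality of a directed set: the least cardinality of a cofinal subset. -/
noncomputable def cofinality (Λ : Type u) [Preorder Λ] : Cardinal.{u} :=
  sInf {c : Cardinal.{u} | ∃ C : Set Λ, (∀ a : Λ, ∃ b ∈ C, a ≤ b) ∧ Cardinal.mk C = c}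

/-! ### Relative cochains -/

def TupIn (P : Set Λ) (n : ℕ) : Type u := {t : Tup Λ n // ∀ i, t.1 i ∈ P}

def RC (S : InvSys.{u, v} Λ) (P : Set Λ) (n : ℕ) : Type max u v :=
  ∀ t : TupIn P n, S.G (t.1.1 0)

instance (S : InvSys.{u, v} Λ) (P : Set Λ) (n : ℕ) : AddCommGroup (RC S P n) :=
  inferInstanceAs (AddCommGroup (∀ t : TupIn P n, S.G (t.1.1 0)))

def TupIn.face {P : Set Λ} {n : ℕ} (t : TupIn P (n + 1)) (i : Fin (n + 2)) : TupIn P n :=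
  ⟨t.1.face i, fun r => t.2 (i.succAbove r)⟩

def rcob (S : InvSys.{u, v} Λ) {P : Set Λ} (n : ℕ) (x : RC S P n) : RC S P (n + 1) :=
  fun t => ∑ i : Fin (n + 2),
    ((-1 : ℤ) ^ (i : ℕ)) • S.p (t.1.2 (Fin.zero_le (i.succAbove 0))) (x (t.face i))

def res (S : InvSys.{u, v} Λ) {P Q : Set Λ} (h : Q ⊆ P) {n : ℕ} (x : RC S P n) : RC S Q n :=
  fun t => x ⟨t.1, fun i => h (t.2 i)⟩

variable {S : InvSys.{u, v} Λ}

theorem res_res {P Q R : Set Λ} (h : Q ⊆ P) (h' : R ⊆ Q) {n : ℕ} (x : RC S P n) :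
    res S h' (res S h x) = res S (h'.trans h) x := rfl

theorem res_refl {P : Set Λ} {n : ℕ} (x : RC S P n) : res S (subset_rfl) x = x := rfl

theorem res_rcob {P Q : Set Λ} (h : Q ⊆ P) {n : ℕ} (x : RC S P n) :
    res S h (rcob S n x) = rcob S n (res S h x) := rfl

theorem rcob_sub {P : Set Λ} (n : ℕ) (x y : RC S P n) :
    rcob S n (x - y) = rcob S n x - rcob S n y := by
  funext t
  show (∑ i : Fin (n+2), _) = rcob S n x t - rcob S n y t
  show _ = (∑ i : Fin (n+2), _) - (∑ i : Fin (n+2), _)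
  rw [← Finset.sum_sub_distrib]
  refine Finset.sum_congr rfl fun i _ => ?_
  show ((-1:ℤ)^(i:ℕ)) • S.p _ ((x - y) (t.face i)) = _
  rw [show (x - y) (t.face i) = x (t.face i) - y (t.face i) from rfl, map_sub, smul_sub]; rfl

theorem p_x_congr {P : Set Λ} {m : ℕ} (x : RC S P m) {c : Λ} (A B : TupIn P m) (hAB : A = B)
    (hA : c ≤ A.1.1 0) (hB : c ≤ B.1.1 0) : S.p hA (x A) = S.p hB (x B) := by
  subst hAB; rfl

theorem p_p {a b c : Λ} (h1 : a ≤ b) (h2 : b ≤ c) (v : S.G c) :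
    S.p h1 (S.p h2 v) = S.p (h1.trans h2) v := S.p_comp h1 h2 v

theorem Fin.sa_val {n : ℕ} (p : Fin (n + 2)) (q : Fin (n + 1)) :
    ((p.succAbove q) : ℕ) = if (q : ℕ) < (p : ℕ) then (q : ℕ) else (q : ℕ) + 1 := by
  rw [Fin.succAbove]
  split_ifs with h1 h2 h2
  · rfl
  · exact absurd (by rwa [Fin.lt_def] at h1) h2
  · exact absurd (by rwa [Fin.lt_def]) h1
  · rfl

theorem Fin.my_sa {n : ℕ} (i j : Fin (n + 2)) (H : i ≤ j) (k : Fin (n + 1)) :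
    (j.succ).succAbove (i.succAbove k) = (i.castSucc).succAbove (j.succAbove k) := by
  have H' : (i : ℕ) ≤ (j : ℕ) := H
  apply Fin.ext
  rw [Fin.sa_val, Fin.sa_val, Fin.sa_val, Fin.sa_val, Fin.val_succ, Fin.coe_castSucc]
  split_ifs <;> omega

theorem face_face {P : Set Λ} {n : ℕ} (t : TupIn P (n + 2)) (i j : Fin (n + 2)) (H : i ≤ j) :
    (t.face (j.succ)).face i = (t.face (i.castSucc)).face j := by
  apply Subtype.ext; apply Subtype.ext; funext k
  show t.1.1 ((j.succ).succAbove (i.succAbove k)) = t.1.1 ((i.castSucc).succAbove (j.succAbove k))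
  rw [Fin.my_sa i j H k]

theorem rcob_rcob {P : Set Λ} (n : ℕ) (x : RC S P n) :
    rcob S (n + 1) (rcob S n x) = 0 := by
  funext t
  have expand : rcob S (n + 1) (rcob S n x) t =
      ∑ a : Fin (n + 3), ∑ b : Fin (n + 2), ((-1 : ℤ) ^ ((a : ℕ) + (b : ℕ))) •
        S.p (t.1.2 (Fin.zero_le (a.succAbove (b.succAbove 0)))) (x ((t.face a).face b)) := by
    show (∑ a : Fin (n + 3), _) = _
    refine Finset.sum_congr rfl fun a _ => ?_
    show ((-1 : ℤ) ^ (a : ℕ)) • S.p _ (∑ b : Fin (n + 2), _) = _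
    refine ((congrArg (fun w => ((-1 : ℤ) ^ (a : ℕ)) • w) (map_sum (S.p _) _ _)).trans
      (Finset.smul_sum ..)).trans ?_
    refine Finset.sum_congr rfl fun b _ => ?_
    show ((-1 : ℤ) ^ (a : ℕ)) • S.p _ (((-1 : ℤ) ^ (b : ℕ)) • S.p _ (x ((t.face a).face b))) = _
    refine (congrArg (fun w => ((-1 : ℤ) ^ (a : ℕ)) • w) (map_zsmul _ _ _)).trans
      ((smul_smul _ _ _).trans ?_)
    congr 1
    · exact (pow_add _ _ _).symm
    · exact p_p _ _ _
  rw [expand, ← Finset.sum_product']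
  set f : Fin (n + 3) × Fin (n + 2) → S.G (t.1.1 0) := fun q =>
    ((-1 : ℤ) ^ ((q.1 : ℕ) + (q.2 : ℕ))) •
      S.p (t.1.2 (Fin.zero_le (q.1.succAbove (q.2.succAbove 0)))) (x ((t.face q.1).face q.2))
    with hf
  show ∑ q ∈ Finset.univ, f q = 0
  have key : ∀ (i j : Fin (n + 2)) (H : i ≤ j), f (i.castSucc, j) + f (j.succ, i) = 0 := by
    intro i j H
    have hT : ((t.face (j.succ)).face i) = ((t.face (i.castSucc)).face j) := face_face t i j H
    have h2 : f (j.succ, i) = ((-1 : ℤ) ^ ((j : ℕ) + 1 + (i : ℕ))) •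
        S.p (t.1.2 (Fin.zero_le ((i.castSucc).succAbove (j.succAbove 0))))
          (x ((t.face (i.castSucc)).face j)) := by
      rw [hf]
      show ((-1 : ℤ) ^ (((j.succ) : ℕ) + (i : ℕ))) • _ = _
      rw [Fin.val_succ]
      congr 1
      exact p_x_congr x _ _ hT _ _
    rw [h2, hf]
    show ((-1 : ℤ) ^ (((i.castSucc) : ℕ) + (j : ℕ))) • _ + _ = 0
    rw [Fin.coe_castSucc]
    have hsg : ((-1 : ℤ) ^ ((j : ℕ) + 1 + (i : ℕ))) = -((-1 : ℤ) ^ ((i : ℕ) + (j : ℕ))) := by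
      rw [show (j : ℕ) + 1 + (i : ℕ) = ((i : ℕ) + (j : ℕ)) + 1 by omega, pow_succ]
      ring
    rw [hsg, neg_smul, add_neg_eq_zero]
  have hbound : ∀ q : Fin (n + 3) × Fin (n + 2), (q.1 : ℕ) ≤ (q.2 : ℕ) → (q.1 : ℕ) < n + 2 :=
    fun q hq => lt_of_le_of_lt hq q.2.2
  have hb3 : ∀ q : Fin (n + 3) × Fin (n + 2), (q.2 : ℕ) < n + 3 := fun q => by have := q.2.2; omega
  have hm1 : ∀ q : Fin (n + 3) × Fin (n + 2), (q.1 : ℕ) - 1 < n + 2 := fun q => by have := q.1.2; omega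
  refine Finset.sum_involution
    (fun q _ => if h : (q.1 : ℕ) ≤ (q.2 : ℕ) then
        (q.2.succ, ⟨(q.1 : ℕ), hbound q h⟩) else (⟨(q.2 : ℕ), hb3 q⟩, ⟨(q.1 : ℕ) - 1, hm1 q⟩))
    (fun q _ => ?_) (fun q _ _ => ?_) (fun q _ => Finset.mem_univ _) (fun q _ => ?_) <;>
    rcases q with ⟨a, b⟩ <;> dsimp only <;> by_cases h : (a : ℕ) ≤ (b : ℕ)
  · rw [dif_pos h]
    exact key ⟨(a : ℕ), hbound (a, b) h⟩ b ((Fin.le_def).2 h)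
  · rw [dif_neg h]
    have ha : (⟨(a : ℕ) - 1, hm1 (a, b)⟩ : Fin (n + 2)).succ = a :=
      Fin.ext (by show (a : ℕ) - 1 + 1 = (a : ℕ); omega)
    have e1 : f (a, b) = f ((⟨(a : ℕ) - 1, hm1 (a, b)⟩ : Fin (n + 2)).succ, b) := by rw [ha]
    rw [e1]
    exact (add_comm _ _).trans
      (key b ⟨(a : ℕ) - 1, hm1 (a, b)⟩ ((Fin.le_def).2 (by show (b : ℕ) ≤ (a : ℕ) - 1; omega)))
  · rw [dif_pos h]
    intro hq
    have := congrArg Fin.val (congrArg Prod.fst hq)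
    rw [Fin.val_succ] at this
    simp only at this
    omega
  · rw [dif_neg h]
    intro hq
    have := congrArg Fin.val (congrArg Prod.fst hq)
    simp only at this
    omega
  · rw [dif_pos h]
    have hc2 : ¬ (((b.succ : Fin (n + 3)) : ℕ) ≤ ((⟨(a : ℕ), hbound (a, b) h⟩ : Fin (n + 2)) : ℕ)) := by
      show ¬ ((b.succ : Fin (n + 3)) : ℕ) ≤ (a : ℕ)
      rw [Fin.val_succ]; omega
    rw [dif_neg hc2]
    refine Prod.ext (Fin.ext ?_) (Fin.ext ?_)
    · show (a : ℕ) = (a : ℕ); rfl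
    · show ((b.succ : Fin (n + 3)) : ℕ) - 1 = (b : ℕ)
      rw [Fin.val_succ]
      omega
  · rw [dif_neg h]
    have hc2 : (((⟨(b : ℕ), hb3 (a, b)⟩ : Fin (n + 3))) : ℕ) ≤ ((⟨(a : ℕ) - 1, hm1 (a, b)⟩ : Fin (n + 2)) : ℕ) := by
      show (b : ℕ) ≤ (a : ℕ) - 1; omega
    rw [dif_pos hc2]
    refine Prod.ext (Fin.ext ?_) (Fin.ext ?_)
    · show (a : ℕ) - 1 + 1 = (a : ℕ); omega
    · show (b : ℕ) = (b : ℕ); rfl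

/-! ### snoc tuples and the cone construction -/

theorem monotone_snoc {k : ℕ} (f : Fin (k + 1) → Λ) (hf : Monotone f) (T : Λ)
    (hT : ∀ r, f r ≤ T) : Monotone (Fin.snoc f T : Fin (k + 2) → Λ) := by
  intro a b hab
  by_cases hb : b = Fin.last (k + 1)
  · subst hb
    rw [Fin.snoc_last]
    by_cases ha : a = Fin.last (k + 1)
    · subst ha; rw [Fin.snoc_last]
    · obtain ⟨a', rfl⟩ := Fin.exists_castSucc_eq.2 ha
      rw [Fin.snoc_castSucc]; exact hT a'
  · obtain ⟨b', rfl⟩ := Fin.exists_castSucc_eq.2 hb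
    have ha : a ≠ Fin.last (k + 1) :=
      ne_of_lt (lt_of_le_of_lt hab (Fin.castSucc_lt_last b'))
    obtain ⟨a', rfl⟩ := Fin.exists_castSucc_eq.2 ha
    rw [Fin.snoc_castSucc, Fin.snoc_castSucc]
    exact hf (by rwa [Fin.castSucc_le_castSucc_iff] at hab)

def snocT {P : Set Λ} {k : ℕ} (T : Λ) (hT : T ∈ P) (hmax : ∀ a ∈ P, a ≤ T)
    (t : TupIn P k) : TupIn P (k + 1) :=
  ⟨⟨Fin.snoc t.1.1 T, monotone_snoc _ t.1.2 T (fun r => hmax _ (t.2 r))⟩, by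
    intro r
    by_cases hr : r = Fin.last (k + 1)
    · subst hr; show (Fin.snoc t.1.1 T : Fin (k+2) → Λ) (Fin.last (k+1)) ∈ P; rw [Fin.snoc_last]; exact hT
    · obtain ⟨r', rfl⟩ := Fin.exists_castSucc_eq.2 hr
      show (Fin.snoc t.1.1 T : Fin (k+2) → Λ) r'.castSucc ∈ P
      rw [Fin.snoc_castSucc]; exact t.2 r'⟩

theorem snocT_face_last {P : Set Λ} {k : ℕ} (T : Λ) (hT : T ∈ P) (hmax : ∀ a ∈ P, a ≤ T)
    (t : TupIn P (k + 1)) :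
    (snocT T hT hmax t).face (Fin.last (k + 2)) = t := by
  apply Subtype.ext; apply Subtype.ext; funext r
  show (Fin.snoc t.1.1 T : Fin (k + 3) → Λ) ((Fin.last (k + 2)).succAbove r) = t.1.1 r
  rw [Fin.succAbove_last]
  exact Fin.snoc_castSucc _ _ r

theorem snocT_face_castSucc {P : Set Λ} {k : ℕ} (T : Λ) (hT : T ∈ P) (hmax : ∀ a ∈ P, a ≤ T)
    (t : TupIn P (k + 1)) (i : Fin (k + 2)) :
    (snocT T hT hmax t).face (i.castSucc) = snocT T hT hmax (t.face i) := by
  apply Subtype.ext; apply Subtype.ext; funext r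
  show (Fin.snoc t.1.1 T : Fin (k + 3) → Λ) ((i.castSucc).succAbove r)
      = (Fin.snoc (t.1.1 ∘ i.succAbove) T : Fin (k + 2) → Λ) r
  induction r using Fin.lastCases with
  | last =>
      have hidx : (i.castSucc).succAbove (Fin.last (k + 1)) = Fin.last (k + 2) := by
        apply Fin.ext
        rw [Fin.sa_val]
        have := i.2
        simp only [Fin.val_last, Fin.coe_castSucc]
        split_ifs with hcond
        · omega
        · rfl
      rw [hidx, Fin.snoc_last, Fin.snoc_last]
  | cast r' =>
      rw [Fin.castSucc_succAbove_castSucc, Fin.snoc_castSucc, Fin.snoc_castSucc]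
      rfl

theorem snocT_zero {P : Set Λ} {k : ℕ} (T : Λ) (hT : T ∈ P) (hmax : ∀ a ∈ P, a ≤ T)
    (t : TupIn P k) : (snocT T hT hmax t).1.1 0 = t.1.1 0 := by
  show (Fin.snoc t.1.1 T : Fin (k + 2) → Λ) 0 = t.1.1 0
  have : (0 : Fin (k + 2)) = (0 : Fin (k + 1)).castSucc := by
    apply Fin.ext; rfl
  rw [this, Fin.snoc_castSucc]

theorem cone_solve {P : Set Λ} {T : Λ} (hT : T ∈ P) (hmax : ∀ a ∈ P, a ≤ T) (k : ℕ)
    (x : RC S P (k + 1)) (hx : rcob S (k + 1) x = 0) :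
    ∃ y : RC S P k, rcob S k y = x := by
  have hle : ∀ s : TupIn P k, s.1.1 0 ≤ (snocT T hT hmax s).1.1 0 :=
    fun s => le_of_eq (snocT_zero T hT hmax s).symm
  refine ⟨fun s => ((-1 : ℤ) ^ (k + 1)) • S.p (hle s) (x (snocT T hT hmax s)), ?_⟩
  funext t
  have hts : ∀ i : Fin (k + 3), t.1.1 0 ≤ ((snocT T hT hmax t).face i).1.1 0 :=
    fun i => (le_of_eq (snocT_zero T hT hmax t).symm).trans
      ((snocT T hT hmax t).1.2 (Fin.zero_le (i.succAbove 0)))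
  have hQ : ∀ i : Fin (k + 2), t.1.1 0 ≤ (snocT T hT hmax (t.face i)).1.1 0 :=
    fun i => (t.1.2 (Fin.zero_le (i.succAbove 0))).trans
      (le_of_eq (snocT_zero T hT hmax (t.face i)).symm)
  have key2 : (0 : S.G (t.1.1 0)) =
      (∑ i : Fin (k + 2), ((-1 : ℤ) ^ (i : ℕ)) •
        S.p (hQ i) (x (snocT T hT hmax (t.face i))))
      + ((-1 : ℤ) ^ (k + 2)) • x t := by
    calc (0 : S.G (t.1.1 0))
        = S.p (le_of_eq (snocT_zero T hT hmax t).symm) (rcob S (k + 1) x (snocT T hT hmax t)) := by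
          rw [show rcob S (k+1) x (snocT T hT hmax t) = 0 from congrFun hx _, map_zero]
      _ = ∑ i : Fin (k + 3), ((-1 : ℤ) ^ (i : ℕ)) • S.p (hts i) (x ((snocT T hT hmax t).face i)) := by
          show S.p _ (∑ i : Fin (k + 3), _) = _
          rw [map_sum]
          refine Finset.sum_congr rfl fun i _ => ?_
          rw [map_zsmul]
          congr 1
          exact p_p _ _ _
      _ = (∑ i : Fin (k + 2), ((-1 : ℤ) ^ ((i.castSucc : Fin (k+3)) : ℕ)) •
            S.p (hts i.castSucc) (x ((snocT T hT hmax t).face i.castSucc)))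
          + ((-1 : ℤ) ^ ((Fin.last (k + 2) : Fin (k+3)) : ℕ)) •
            S.p (hts (Fin.last (k + 2))) (x ((snocT T hT hmax t).face (Fin.last (k + 2)))) :=
          Fin.sum_univ_castSucc _
      _ = (∑ i : Fin (k + 2), ((-1 : ℤ) ^ (i : ℕ)) •
            S.p (hQ i) (x (snocT T hT hmax (t.face i))))
          + ((-1 : ℤ) ^ (k + 2)) • x t := by
          congr 1
          · refine Finset.sum_congr rfl fun i _ => ?_
            rw [Fin.coe_castSucc]
            congr 1
            exact p_x_congr x _ _ (snocT_face_castSucc T hT hmax t i) _ _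
          · rw [Fin.val_last]
            congr 1
            calc S.p (hts (Fin.last (k + 2))) (x ((snocT T hT hmax t).face (Fin.last (k + 2))))
                = S.p (le_refl (t.1.1 0)) (x t) :=
                  p_x_congr x _ _ (snocT_face_last T hT hmax t) _ _
              _ = x t := S.p_refl _ _ _
  have hsum : (∑ i : Fin (k + 2), ((-1 : ℤ) ^ (i : ℕ)) •
      S.p (hQ i) (x (snocT T hT hmax (t.face i)))) = -(((-1 : ℤ) ^ (k + 2)) • x t) := by
    rw [eq_neg_iff_add_eq_zero]
    exact key2.symm
  show (∑ i : Fin (k + 2), _) = x t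
  calc (∑ i : Fin (k + 2), ((-1 : ℤ) ^ (i : ℕ)) •
        S.p (t.1.2 (Fin.zero_le (i.succAbove 0)))
          ((((-1 : ℤ) ^ (k + 1)) • S.p (hle (t.face i)) (x (snocT T hT hmax (t.face i))))))
      = ∑ i : Fin (k + 2), ((-1 : ℤ) ^ (k + 1)) • (((-1 : ℤ) ^ (i : ℕ)) •
          S.p (hQ i) (x (snocT T hT hmax (t.face i)))) := by
        refine Finset.sum_congr rfl fun i _ => ?_
        refine ((congrArg (fun w => ((-1 : ℤ) ^ (i : ℕ)) • w) (map_zsmul _ _ _)).trans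
          (smul_comm _ _ _)).trans ?_
        congr 2
        exact p_p _ _ _
    _ = ((-1 : ℤ) ^ (k + 1)) • ∑ i : Fin (k + 2), ((-1 : ℤ) ^ (i : ℕ)) •
          S.p (hQ i) (x (snocT T hT hmax (t.face i))) := by rw [Finset.smul_sum]
    _ = ((-1 : ℤ) ^ (k + 1)) • (-(((-1 : ℤ) ^ (k + 2)) • x t)) := by rw [hsum]
    _ = ((-1 : ℤ) ^ (k + 1) * -((-1 : ℤ) ^ (k + 2))) • x t := by rw [← neg_smul, smul_smul]
    _ = x t := by
        have h1 : ((-1 : ℤ) ^ (k + 1) * -((-1 : ℤ) ^ (k + 2))) = 1 := by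
          rw [mul_neg, ← pow_add]
          rw [Odd.neg_one_pow ⟨k + 1, by ring⟩]
          ring
        rw [h1, one_smul]

/-! ### degree-0 utilities -/

def oneT {P : Set Λ} (a : Λ) (ha : a ∈ P) : TupIn P 0 :=
  ⟨⟨fun _ => a, monotone_const⟩, fun _ => ha⟩

theorem oneT_eq {P : Set Λ} (t : TupIn P 0) : t = oneT (t.1.1 0) (t.2 0) := by
  apply Subtype.ext; apply Subtype.ext; funext r
  rw [Fin.fin_one_eq_zero r]
  rfl

theorem d_oneT_eq {P : Set Λ} (d : RC S P 0) (s : TupIn P 0) :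
    d (oneT (s.1.1 0) (s.2 0)) = d s := by
  exact ((S.p_refl _ (le_refl (s.1.1 0)) _).symm.trans
    (p_x_congr d _ _ (oneT_eq s).symm _ (le_refl (s.1.1 0)))).trans (S.p_refl _ _ _)

def pairT {P : Set Λ} (a b : Λ) (hab : a ≤ b) (ha : a ∈ P) (hb : b ∈ P) : TupIn P 1 :=
  ⟨⟨fun i => if i = 0 then a else b, by
      intro i j hij
      dsimp only
      by_cases hi : i = 0
      · subst hi
        by_cases hj : j = 0
        · subst hj; exact le_refl _
        · rw [if_pos rfl, if_neg hj]; exact hab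
      · have hj : j ≠ 0 := fun e => hi (le_antisymm (e ▸ hij) (Fin.zero_le i))
        rw [if_neg hi, if_neg hj]⟩,
    fun i => by
      dsimp only
      by_cases hi : i = 0 <;> simp [hi, ha, hb]⟩

theorem pairT_face_zero {P : Set Λ} (a b : Λ) (hab : a ≤ b) (ha : a ∈ P) (hb : b ∈ P) :
    (pairT a b hab ha hb).face 0 = oneT b hb := by
  apply Subtype.ext; apply Subtype.ext; funext r
  rw [Fin.fin_one_eq_zero r]
  show (if ((0 : Fin 2).succAbove 0) = 0 then a else b) = b
  rw [Fin.zero_succAbove]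
  rfl

theorem pairT_face_one {P : Set Λ} (a b : Λ) (hab : a ≤ b) (ha : a ∈ P) (hb : b ∈ P) :
    (pairT a b hab ha hb).face 1 = oneT a ha := by
  apply Subtype.ext; apply Subtype.ext; funext r
  rw [Fin.fin_one_eq_zero r]
  show (if ((1 : Fin 2).succAbove 0) = 0 then a else b) = a
  rw [Fin.succAbove_ne_zero_zero (by decide : (1 : Fin 2) ≠ 0)]
  rfl

theorem pairT_zero {P : Set Λ} (a b : Λ) (hab : a ≤ b) (ha : a ∈ P) (hb : b ∈ P) :
    (pairT a b hab ha hb).1.1 0 = a := rfl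

theorem thread_rel {P : Set Λ} (d : RC S P 0) (hd : rcob S 0 d = 0) {a b : Λ} (hab : a ≤ b)
    (ha : a ∈ P) (hb : b ∈ P) :
    S.p hab (d (oneT b hb)) = d (oneT a ha) := by
  have key : (∑ i : Fin 2, ((-1 : ℤ) ^ (i : ℕ)) •
      S.p ((pairT a b hab ha hb).1.2 (Fin.zero_le (i.succAbove 0)))
        (d ((pairT a b hab ha hb).face i))) = (0 : S.G ((pairT a b hab ha hb).1.1 0)) :=
    congrFun hd (pairT a b hab ha hb)
  rw [Fin.sum_univ_two] at key
  have e0 : ((-1 : ℤ) ^ (((0 : Fin 2)) : ℕ)) •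
      S.p ((pairT a b hab ha hb).1.2 (Fin.zero_le ((0 : Fin 2).succAbove 0)))
        (d ((pairT a b hab ha hb).face 0)) = S.p hab (d (oneT b hb)) := by
    rw [show (((0 : Fin 2)) : ℕ) = 0 from rfl, pow_zero, one_smul]
    exact p_x_congr d _ _ (pairT_face_zero a b hab ha hb) _ _
  have e1 : ((-1 : ℤ) ^ (((1 : Fin 2)) : ℕ)) •
      S.p ((pairT a b hab ha hb).1.2 (Fin.zero_le ((1 : Fin 2).succAbove 0)))
        (d ((pairT a b hab ha hb).face 1)) = -(d (oneT a ha)) := by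
    rw [show (((1 : Fin 2)) : ℕ) = 1 from rfl, pow_one, neg_smul, one_smul]
    congr 1
    exact (p_x_congr d _ _ (pairT_face_one a b hab ha hb) _ (le_refl a)).trans
      (S.p_refl _ _ _)
  rw [e0, e1] at key
  exact add_neg_eq_zero.1 key

theorem thread_extend {P Q : Set Λ} (hPQ : P ⊆ Q) {T0 T1 : Λ} (hT0 : T0 ∈ P)
    (hmax0 : ∀ a ∈ P, a ≤ T0) (hT1 : T1 ∈ Q) (hmax1 : ∀ a ∈ Q, a ≤ T1)
    (hfl : ∀ {a b : Λ} (h : a ≤ b), Function.Surjective (S.p h))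
    (d : RC S P 0) (hd : rcob S 0 d = 0) :
    ∃ w : RC S Q 0, rcob S 0 w = 0 ∧ res S hPQ w = d := by
  have hT01 : T0 ≤ T1 := hmax1 T0 (hPQ hT0)
  obtain ⟨g, hg⟩ := hfl hT01 (d (oneT T0 hT0))
  refine ⟨fun s => S.p (hmax1 _ (s.2 0)) g, ?_, ?_⟩
  · funext t
    show (∑ i : Fin 2, _) = (0 : S.G (t.1.1 0))
    rw [Fin.sum_univ_two]
    have e0 : ((-1 : ℤ) ^ (((0 : Fin 2)) : ℕ)) •
        S.p (t.1.2 (Fin.zero_le ((0 : Fin 2).succAbove 0)))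
          (S.p (hmax1 _ ((t.face (0 : Fin 2)).2 0)) g) =
        S.p ((t.1.2 (Fin.zero_le ((0 : Fin 2).succAbove 0))).trans
          (hmax1 _ ((t.face (0 : Fin 2)).2 0))) g := by
      rw [show (((0 : Fin 2)) : ℕ) = 0 from rfl, pow_zero, one_smul]
      exact p_p _ _ _
    have e1 : ((-1 : ℤ) ^ (((1 : Fin 2)) : ℕ)) •
        S.p (t.1.2 (Fin.zero_le ((1 : Fin 2).succAbove 0)))
          (S.p (hmax1 _ ((t.face (1 : Fin 2)).2 0)) g) =
        -(S.p ((t.1.2 (Fin.zero_le ((1 : Fin 2).succAbove 0))).trans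
          (hmax1 _ ((t.face (1 : Fin 2)).2 0))) g) := by
      rw [show (((1 : Fin 2)) : ℕ) = 1 from rfl, pow_one, neg_smul, one_smul]
      congr 1
      exact p_p _ _ _
    show ((-1 : ℤ) ^ (((0 : Fin 2)) : ℕ)) • _ + ((-1 : ℤ) ^ (((1 : Fin 2)) : ℕ)) • _ = _
    rw [e0, e1, add_neg_eq_zero]
  · funext s
    show S.p (hmax1 _ (hPQ (s.2 0))) g = d s
    have e2 : S.p (hmax1 (s.1.1 0) (hPQ (s.2 0))) g
        = S.p (hmax0 _ (s.2 0)) (S.p hT01 g) := (p_p _ _ _).symm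
    rw [e2, hg, thread_rel d hd (hmax0 _ (s.2 0)) (s.2 0) hT0]
    exact d_oneT_eq d s

/-! ### extension by zero and the correction device -/

noncomputable def ext0 (S : InvSys.{u, v} Λ) {P Q : Set Λ} (hPQ : P ⊆ Q) {m : ℕ}
    (u : RC S P m) : RC S Q m :=
  fun t =>
    letI : Decidable (∀ i, t.1.1 i ∈ P) := Classical.propDecidable _
    if h : ∀ i, t.1.1 i ∈ P then u ⟨t.1, h⟩ else 0

theorem res_ext0 {P Q : Set Λ} (hPQ : P ⊆ Q) {m : ℕ} (u : RC S P m) :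
    res S hPQ (ext0 S hPQ u) = u := by
  funext t
  show (letI : Decidable (∀ i, (t.1.1 i) ∈ P) := Classical.propDecidable _
    if h : ∀ i, t.1.1 i ∈ P then u ⟨t.1, h⟩ else 0) = u t
  rw [dif_pos (fun i => t.2 i)]
  rfl

theorem correct_extend {P Q : Set Λ} (hPQ : P ⊆ Q) (k : ℕ) (x : RC S Q (k + 1))
    (z : RC S Q k) (hz : rcob S k z = x) (y : RC S P k) (hy : rcob S k y = res S hPQ x)
    (horacle : ∀ d : RC S P k, rcob S k d = 0 →
      ∃ w : RC S Q k, rcob S k w = 0 ∧ res S hPQ w = d) :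
    ∃ y' : RC S Q k, rcob S k y' = x ∧ res S hPQ y' = y := by
  obtain ⟨w, hw0, hwr⟩ := horacle (res S hPQ z - y)
    (by rw [rcob_sub, ← res_rcob, hz, hy, sub_self])
  refine ⟨z - w, by rw [rcob_sub, hz, hw0, sub_zero], ?_⟩
  show res S hPQ z - res S hPQ w = y
  rw [hwr]
  exact sub_sub_cancel _ _

theorem oracle_of_solve {P Q : Set Λ} (hPQ : P ⊆ Q) (k : ℕ)
    (hsolve : ∀ d : RC S P (k + 1), rcob S (k + 1) d = 0 → ∃ u : RC S P k, rcob S k u = d) :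
    ∀ d : RC S P (k + 1), rcob S (k + 1) d = 0 →
      ∃ w : RC S Q (k + 1), rcob S (k + 1) w = 0 ∧ res S hPQ w = d := by
  intro d hd
  obtain ⟨u, hu⟩ := hsolve d hd
  exact ⟨rcob S k (ext0 S hPQ u), rcob_rcob _ _, by rw [res_rcob, res_ext0, hu]⟩

/-! ### gluing solutions over directed families of subsets -/

theorem tup_cover {ι : Type w} [Nonempty ι] {P : Set Λ} (M : ι → Set Λ)
    (hcov : ∀ a ∈ P, ∃ i, a ∈ M i) (hdir : ∀ i j, ∃ l, M i ⊆ M l ∧ M j ⊆ M l)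
    (m : ℕ) (t : TupIn P m) : ∃ i, ∀ r, t.1.1 r ∈ M i := by
  have main : ∀ L : List (Fin (m + 1)), ∃ i, ∀ r ∈ L, t.1.1 r ∈ M i := by
    intro L
    induction L with
    | nil => exact ⟨Classical.arbitrary ι, by simp⟩
    | cons r L ih =>
        obtain ⟨i, hi⟩ := ih
        obtain ⟨j, hj⟩ := hcov _ (t.2 r)
        obtain ⟨l, h1, h2⟩ := hdir i j
        refine ⟨l, fun r' hr' => ?_⟩
        rcases List.mem_cons.1 hr' with h | h
        · rw [h]; exact h2 hj
        · exact h1 (hi r' h)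
  obtain ⟨i, hi⟩ := main (List.finRange (m + 1))
  exact ⟨i, fun r => hi r (List.mem_finRange r)⟩

theorem glue {ι : Type w} [Nonempty ι] {P : Set Λ} (M : ι → Set Λ) (hMP : ∀ i, M i ⊆ P)
    (hcov : ∀ a ∈ P, ∃ i, a ∈ M i) (hdir : ∀ i j, ∃ l, M i ⊆ M l ∧ M j ⊆ M l)
    (k : ℕ) (x : RC S P (k + 1)) (y : ∀ i, RC S (M i) k)
    (hy : ∀ i, rcob S k (y i) = res S (hMP i) x)
    (hcomp : ∀ i l (h : M i ⊆ M l), res S h (y l) = y i) :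
    ∃ Y : RC S P k, rcob S k Y = x ∧ ∀ i, res S (hMP i) Y = y i := by
  have welldef : ∀ (tv : Tup Λ k) (i j : ι) (hi : ∀ r, tv.1 r ∈ M i) (hj : ∀ r, tv.1 r ∈ M j),
      y i ⟨tv, hi⟩ = y j ⟨tv, hj⟩ := by
    intro tv i j hi hj
    obtain ⟨l, h1, h2⟩ := hdir i j
    have e1 : y i ⟨tv, hi⟩ = y l ⟨tv, fun r => h1 (hi r)⟩ := by rw [← hcomp i l h1]; rfl
    have e2 : y j ⟨tv, hj⟩ = y l ⟨tv, fun r => h2 (hj r)⟩ := by rw [← hcomp j l h2]; rfl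
    rw [e1, e2]
  refine ⟨fun t => y (Classical.choose (tup_cover M hcov hdir k t))
    ⟨t.1, Classical.choose_spec (tup_cover M hcov hdir k t)⟩, ?_, ?_⟩
  · funext t
    obtain ⟨l, hl⟩ := tup_cover M hcov hdir (k + 1) t
    have hfl : ∀ i : Fin (k + 2), ∀ r, (t.face i).1.1 r ∈ M l :=
      fun i r => hl (i.succAbove r)
    have hmain : (∑ i : Fin (k + 2), ((-1 : ℤ) ^ (i : ℕ)) •
        S.p (t.1.2 (Fin.zero_le (i.succAbove 0)))
          (y (Classical.choose (tup_cover M hcov hdir k (t.face i)))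
            ⟨(t.face i).1, Classical.choose_spec (tup_cover M hcov hdir k (t.face i))⟩))
        = rcob S k (y l) ⟨t.1, hl⟩ := by
      show _ = (∑ i : Fin (k + 2), _)
      refine Finset.sum_congr rfl fun i _ => ?_
      congr 1
      exact congrArg (S.p _) (welldef (t.face i).1 _ l _ (hfl i))
    show (∑ i : Fin (k + 2), _) = x t
    rw [hmain, hy l]
    rfl
  · intro i
    funext s
    show y (Classical.choose _) ⟨s.1, _⟩ = y i s
    exact welldef s.1 _ i _ s.2

/-! ### the countable base case -/

theorem L0 {P C : Set Λ}
    (hfl : ∀ {a b : Λ} (h : a ≤ b), Function.Surjective (S.p h))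
    (hCP : C ⊆ P) (hcof : ∀ a ∈ P, ∃ c ∈ C, a ≤ c)
    (hub : ∀ c ∈ C, ∀ c' ∈ C, ∃ c'' ∈ C, c ≤ c'' ∧ c' ≤ c'')
    (hcard : Cardinal.mk C ≤ Cardinal.aleph0)
    (k : ℕ) (x : RC S P (k + 1)) (hx : rcob S (k + 1) x = 0) :
    ∃ y : RC S P k, rcob S k y = x := by
  rcases Set.eq_empty_or_nonempty C with hC | hC
  · have hPe : ∀ a, a ∉ P := fun a ha => by
      obtain ⟨c, hc, -⟩ := hcof a ha
      rw [hC] at hc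
      exact hc
    refine ⟨fun t => absurd (t.2 0) (hPe _), ?_⟩
    funext t
    exact absurd (t.2 0) (hPe _)
  · haveI : Countable C := Cardinal.mk_le_aleph0_iff.1 hcard
    haveI : Nonempty C := hC.to_subtype
    obtain ⟨f, hf⟩ := exists_surjective_nat C
    have hubC : ∀ c c' : C, ∃ c'' : C, (c : Λ) ≤ c'' ∧ (c' : Λ) ≤ c'' := by
      intro c c'
      obtain ⟨c'', hc'', h1, h2⟩ := hub c c.2 c' c'.2
      exact ⟨⟨c'', hc''⟩, h1, h2⟩
    choose ub hub1 hub2 using hubC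
    set e : ℕ → C := fun j => Nat.rec (f 0) (fun j ej => ub ej (f (j + 1))) j with he
    have he_mono : ∀ j, (e j : Λ) ≤ e (j + 1) := fun j => hub1 _ _
    have he_mono' : ∀ j j', j ≤ j' → (e j : Λ) ≤ e j' := by
      intro j j' h
      induction h with
      | refl => exact le_refl _
      | step h ih => exact ih.trans (he_mono _)
    have hef : ∀ j, (f j : Λ) ≤ e j := by
      intro j
      cases j with
      | zero => exact le_refl _
      | succ j => exact hub2 _ _
    set M : ℕ → Set Λ := fun j => {a | a ∈ P ∧ a ≤ (e j : Λ)} with hM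
    have hMP : ∀ j, M j ⊆ P := fun j a ha => ha.1
    have hMmono : ∀ j j' (h : j ≤ j'), M j ⊆ M j' :=
      fun j j' h a ha => ⟨ha.1, ha.2.trans (he_mono' j j' h)⟩
    have heM : ∀ j, (e j : Λ) ∈ M j := fun j => ⟨hCP (e j).2, le_refl _⟩
    have hmaxM : ∀ j, ∀ a ∈ M j, a ≤ (e j : Λ) := fun j a ha => ha.2
    have hcovM : ∀ a ∈ P, ∃ j, a ∈ M j := by
      intro a ha
      obtain ⟨c, hc, hac⟩ := hcof a ha
      obtain ⟨j, hj⟩ := hf ⟨c, hc⟩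
      have hcf : (c : Λ) ≤ (e j : Λ) := by
        have := hef j
        rw [hj] at this
        exact this
      exact ⟨j, ha, hac.trans hcf⟩
    have hx_res : ∀ j, rcob S (k + 1) (res S (hMP j) x) = 0 := fun j => by
      rw [← res_rcob, hx]
      rfl
    have sol0 : {y : RC S (M 0) k // rcob S k y = res S (hMP 0) x} := by
      have := cone_solve (heM 0) (hmaxM 0) k (res S (hMP 0) x) (hx_res 0)
      exact ⟨Classical.choose this, Classical.choose_spec this⟩
    have step : ∀ j (yj : {y : RC S (M j) k // rcob S k y = res S (hMP j) x}),
        ∃ y' : {y : RC S (M (j + 1)) k // rcob S k y = res S (hMP (j + 1)) x},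
          res S (hMmono j (j + 1) (Nat.le_succ j)) y'.1 = yj.1 := by
      intro j yj
      obtain ⟨z, hz⟩ := cone_solve (heM (j + 1)) (hmaxM (j + 1)) k (res S (hMP (j + 1)) x)
        (hx_res (j + 1))
      have horacle : ∀ d : RC S (M j) k, rcob S k d = 0 →
          ∃ w : RC S (M (j + 1)) k, rcob S k w = 0 ∧
            res S (hMmono j (j + 1) (Nat.le_succ j)) w = d := by
        cases k with
        | zero =>
            intro d hd
            exact thread_extend (hMmono j (j + 1) (Nat.le_succ j)) (heM j) (hmaxM j)
              (heM (j + 1)) (hmaxM (j + 1)) hfl d hd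
        | succ k' =>
            intro d hd
            exact oracle_of_solve (hMmono j (j + 1) (Nat.le_succ j)) k'
              (fun d' hd' => cone_solve (heM j) (hmaxM j) k' d' hd') d hd
      obtain ⟨y', h1, h2⟩ := correct_extend (hMmono j (j + 1) (Nat.le_succ j)) k
        (res S (hMP (j + 1)) x) z hz yj.1 (by rw [yj.2]; rfl) horacle
      exact ⟨⟨y', h1⟩, h2⟩
    set seq : ∀ j, {y : RC S (M j) k // rcob S k y = res S (hMP j) x} := fun j =>
      Nat.rec (motive := fun j => {y : RC S (M j) k // rcob S k y = res S (hMP j) x})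
        sol0 (fun j yj => Classical.choose (step j yj)) j with hseqdef
    have hseq : ∀ j, res S (hMmono j (j + 1) (Nat.le_succ j)) (seq (j + 1)).1 = (seq j).1 :=
      fun j => Classical.choose_spec (step j (seq j))
    have hseq' : ∀ j j' (h : j ≤ j'), res S (hMmono j j' h) (seq j').1 = (seq j).1 := by
      intro j j' h
      induction h with
      | refl => rfl
      | @step j'' h ih =>
          calc res S (hMmono j (j'' + 1) (le_trans h (Nat.le_succ j''))) (seq (j'' + 1)).1
              = res S (hMmono j j'' h)
                  (res S (hMmono j'' (j'' + 1) (Nat.le_succ j'')) (seq (j'' + 1)).1) := rfl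
            _ = res S (hMmono j j'' h) (seq j'').1 := by rw [hseq j'']
            _ = (seq j).1 := ih
    have hcomp : ∀ i l (h : M i ⊆ M l), res S h (seq l).1 = (seq i).1 := by
      intro i l h
      rcases le_total i l with hil | hli
      · exact hseq' i l hil
      · calc res S h (seq l).1 = res S h (res S (hMmono l i hli) (seq i).1) := by
              rw [hseq' l i hli]
          _ = (seq i).1 := rfl
    obtain ⟨Y, hY, -⟩ := glue M hMP hcovM
      (fun i j => ⟨max i j, hMmono _ _ (le_max_left _ _), hMmono _ _ (le_max_right _ _)⟩)
      k x (fun j => (seq j).1) (fun j => (seq j).2) hcomp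
    exact ⟨Y, hY⟩

/-! ### directed closure of a set under a binary upper bound operation -/

def Dit (ub : Λ → Λ → Λ) : ℕ → Set Λ → Set Λ
  | 0, A => A
  | s + 1, A => Dit ub s A ∪ Set.image2 ub (Dit ub s A) (Dit ub s A)

def Dcl (ub : Λ → Λ → Λ) (A : Set Λ) : Set Λ := ⋃ s : ℕ, Dit ub s A

section DclFacts

variable {ub : Λ → Λ → Λ} {C : Set Λ}

theorem Dit_subset_C (hubC : ∀ a ∈ C, ∀ b ∈ C, ub a b ∈ C ∧ a ≤ ub a b ∧ b ≤ ub a b) {A : Set Λ} (hA : A ⊆ C) : ∀ s, Dit ub s A ⊆ C := by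
  intro s
  induction s with
  | zero => exact hA
  | succ s ih =>
      intro a ha
      rcases ha with h | h
      · exact ih h
      · obtain ⟨u, hu, v, hv, rfl⟩ := h
        exact (hubC u (ih hu) v (ih hv)).1

theorem Dcl_subset_C (hubC : ∀ a ∈ C, ∀ b ∈ C, ub a b ∈ C ∧ a ≤ ub a b ∧ b ≤ ub a b) {A : Set Λ} (hA : A ⊆ C) : Dcl ub A ⊆ C := by
  intro a ha
  obtain ⟨s, hs⟩ := Set.mem_iUnion.1 ha
  exact Dit_subset_C hubC hA s hs

theorem subset_Dcl (A : Set Λ) : A ⊆ Dcl ub A :=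
  fun a ha => Set.mem_iUnion.2 ⟨0, ha⟩

theorem Dit_mono_le {A : Set Λ} : ∀ s s', s ≤ s' → Dit ub s A ⊆ Dit ub s' A := by
  intro s s' h
  induction h with
  | refl => exact subset_rfl
  | step h ih => exact ih.trans Set.subset_union_left

theorem Dcl_ub_mem (hubC : ∀ a ∈ C, ∀ b ∈ C, ub a b ∈ C ∧ a ≤ ub a b ∧ b ≤ ub a b) {A : Set Λ} (hA : A ⊆ C) {a b : Λ} (ha : a ∈ Dcl ub A) (hb : b ∈ Dcl ub A) :
    ub a b ∈ Dcl ub A ∧ a ≤ ub a b ∧ b ≤ ub a b := by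
  obtain ⟨s1, hs1⟩ := Set.mem_iUnion.1 ha
  obtain ⟨s2, hs2⟩ := Set.mem_iUnion.1 hb
  have h1 : a ∈ Dit ub (max s1 s2) A := Dit_mono_le s1 _ (le_max_left _ _) hs1
  have h2 : b ∈ Dit ub (max s1 s2) A := Dit_mono_le s2 _ (le_max_right _ _) hs2
  refine ⟨Set.mem_iUnion.2 ⟨max s1 s2 + 1, Or.inr ⟨a, h1, b, h2, rfl⟩⟩, ?_, ?_⟩
  · exact (hubC a (Dit_subset_C hubC hA _ h1) b (Dit_subset_C hubC hA _ h2)).2.1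
  · exact (hubC a (Dit_subset_C hubC hA _ h1) b (Dit_subset_C hubC hA _ h2)).2.2

theorem Dit_mono_set {A B : Set Λ} (hAB : A ⊆ B) : ∀ s, Dit ub s A ⊆ Dit ub s B := by
  intro s
  induction s with
  | zero => exact hAB
  | succ s ih =>
      intro a ha
      rcases ha with h | h
      · exact Or.inl (ih h)
      · obtain ⟨u, hu, v, hv, rfl⟩ := h
        exact Or.inr ⟨u, ih hu, v, ih hv, rfl⟩

theorem Dcl_mono {A B : Set Λ} (hAB : A ⊆ B) : Dcl ub A ⊆ Dcl ub B := by
  intro a ha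
  obtain ⟨s, hs⟩ := Set.mem_iUnion.1 ha
  exact Set.mem_iUnion.2 ⟨s, Dit_mono_set hAB s hs⟩

theorem Dcl_iUnion (hubC : ∀ a ∈ C, ∀ b ∈ C, ub a b ∈ C ∧ a ≤ ub a b ∧ b ≤ ub a b)
    {ι : Type w} [Nonempty ι] (A : ι → Set Λ)
    (hA : ∀ i, A i ⊆ C) (hdir : ∀ i j, ∃ l, A i ⊆ A l ∧ A j ⊆ A l) :
    Dcl ub (⋃ i, A i) = ⋃ i, Dcl ub (A i) := by
  apply Set.eq_of_subset_of_subset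
  · have main : ∀ s, ∀ a, a ∈ Dit ub s (⋃ i, A i) → a ∈ ⋃ i, Dcl ub (A i) := by
      intro s
      induction s with
      | zero =>
          intro a ha
          obtain ⟨i, hi⟩ := Set.mem_iUnion.1 ha
          exact Set.mem_iUnion.2 ⟨i, subset_Dcl (A i) hi⟩
      | succ s ih =>
          intro a ha
          rcases ha with h | h
          · exact ih _ h
          · obtain ⟨u, hu, v, hv, rfl⟩ := h
            obtain ⟨i, hi⟩ := Set.mem_iUnion.1 (ih _ hu)
            obtain ⟨j, hj⟩ := Set.mem_iUnion.1 (ih _ hv)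
            obtain ⟨l, h1, h2⟩ := hdir i j
            refine Set.mem_iUnion.2 ⟨l, ?_⟩
            exact (Dcl_ub_mem hubC (hA l) (Dcl_mono h1 hi) (Dcl_mono h2 hj)).1
    intro a ha
    obtain ⟨s, hs⟩ := Set.mem_iUnion.1 ha
    exact main s a hs
  · exact Set.iUnion_subset fun i => Dcl_mono (Set.subset_iUnion A i)

theorem Dit_card {A : Set Λ} :
    ∀ s, Cardinal.mk (Dit ub s A) ≤ max (Cardinal.mk A) Cardinal.aleph0 := by
  have hinf : Cardinal.aleph0 ≤ max (Cardinal.mk A) Cardinal.aleph0 := le_max_right _ _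
  intro s
  induction s with
  | zero => exact le_max_left _ _
  | succ s ih =>
      calc Cardinal.mk (Dit ub (s + 1) A)
          ≤ Cardinal.mk (Dit ub s A) + Cardinal.mk (Set.image2 ub (Dit ub s A) (Dit ub s A)) :=
            Cardinal.mk_union_le _ _
        _ ≤ (max (Cardinal.mk A) Cardinal.aleph0) +
            (max (Cardinal.mk A) Cardinal.aleph0) * (max (Cardinal.mk A) Cardinal.aleph0) := by
            refine add_le_add ih (le_trans Cardinal.mk_image2_le ?_)
            exact mul_le_mul' ih ih
        _ = (max (Cardinal.mk A) Cardinal.aleph0) + (max (Cardinal.mk A) Cardinal.aleph0) := by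
            rw [Cardinal.mul_eq_self hinf]
        _ = max (Cardinal.mk A) Cardinal.aleph0 := Cardinal.add_eq_self hinf

theorem Dcl_card {A : Set Λ} :
    Cardinal.mk (Dcl ub A) ≤ max (Cardinal.mk A) Cardinal.aleph0 := by
  have he : Dcl ub A = ⋃ s : ULift.{u} ℕ, Dit ub s.down A := by
    apply Set.ext
    intro a
    constructor
    · intro ha
      obtain ⟨s, hs⟩ := Set.mem_iUnion.1 ha
      exact Set.mem_iUnion.2 ⟨ULift.up s, hs⟩
    · intro ha
      obtain ⟨s, hs⟩ := Set.mem_iUnion.1 ha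
      exact Set.mem_iUnion.2 ⟨s.down, hs⟩
  rw [he]
  calc Cardinal.mk (⋃ s : ULift.{u} ℕ, Dit ub s.down A)
      ≤ Cardinal.mk (ULift.{u} ℕ) * ⨆ s : ULift.{u} ℕ, Cardinal.mk (Dit ub s.down A) :=
        Cardinal.mk_iUnion_le _
    _ ≤ Cardinal.aleph0 * (max (Cardinal.mk A) Cardinal.aleph0) := by
        refine mul_le_mul' (le_of_eq (Cardinal.mk_denumerable _)) ?_
        exact ciSup_le' fun s => Dit_card _
    _ ≤ (max (Cardinal.mk A) Cardinal.aleph0) * (max (Cardinal.mk A) Cardinal.aleph0) :=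
        mul_le_mul' (le_max_right _ _) le_rfl
    _ = max (Cardinal.mk A) Cardinal.aleph0 := Cardinal.mul_eq_self (le_max_right _ _)

theorem Dcl_empty : Dcl ub (∅ : Set Λ) = ∅ := by
  have main : ∀ s, ∀ a : Λ, a ∉ Dit ub s (∅ : Set Λ) := by
    intro s
    induction s with
    | zero => exact fun a ha => ha
    | succ s ih =>
        intro a ha
        rcases ha with h | h
        · exact ih a h
        · obtain ⟨u, hu, v, hv, rfl⟩ := h
          exact ih u hu
  apply Set.eq_empty_of_forall_notMem
  intro a ha
  obtain ⟨s, hs⟩ := Set.mem_iUnion.1 ha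
  exact main s a hs

end DclFacts

/-! ### partial solutions (for the Zorn argument) -/

structure PartSol (S : InvSys.{u, v} Λ) {P : Set Λ} (k : ℕ) (x : RC S P (k + 1))
    {I : Type u} (M : Set I → Set Λ) (hMP : ∀ J, M J ⊆ P)
    (hMmono : ∀ ⦃J J' : Set I⦄, J ⊆ J' → M J ⊆ M J')
    (low : Set I → Prop) : Type (max u v) where
  J : Set I
  lower : low J
  y : RC S (M J) k
  sol : rcob S k y = res S (hMP J) x

instance PartSol.instPreorder {S : InvSys.{u, v} Λ} {P : Set Λ} {k : ℕ} {x : RC S P (k + 1)}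
    {I : Type u} {M : Set I → Set Λ} {hMP : ∀ J, M J ⊆ P}
    {hMmono : ∀ ⦃J J' : Set I⦄, J ⊆ J' → M J ⊆ M J'} {low : Set I → Prop} :
    Preorder (PartSol S k x M hMP hMmono low) where
  le a b := ∃ h : a.J ⊆ b.J, res S (hMmono h) b.y = a.y
  le_refl a := ⟨subset_rfl, rfl⟩
  le_trans a b c h1 h2 := ⟨h1.1.trans h2.1, by rw [← h1.2, ← h2.2]; rfl⟩

/-! ### the main induction -/

theorem Lmain (hfl : ∀ {a b : Λ} (h : a ≤ b), Function.Surjective (S.p h)) :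
    ∀ (m : ℕ) (P C : Set Λ),
      C ⊆ P → (∀ a ∈ P, ∃ c ∈ C, a ≤ c) →
      (∀ c ∈ C, ∀ c' ∈ C, ∃ c'' ∈ C, c ≤ c'' ∧ c' ≤ c'') →
      Cardinal.mk C ≤ Cardinal.aleph m →
      ∀ k, m ≤ k → ∀ x : RC S P (k + 1), rcob S (k + 1) x = 0 →
        ∃ y : RC S P k, rcob S k y = x := by
  intro m
  induction m with
  | zero =>
      intro P C hCP hcof hub hcard k _ x hx
      exact L0 hfl hCP hcof hub (by rwa [Nat.cast_zero, Cardinal.aleph_zero] at hcard) k x hx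
  | succ m ih =>
      intro P C hCP hcof hub hcard k hk x hx
      rcases Set.eq_empty_or_nonempty C with hC | hC
      · have hPe : ∀ a, a ∉ P := fun a ha => by
          obtain ⟨c, hc, -⟩ := hcof a ha
          rw [hC] at hc
          exact hc
        refine ⟨fun t => absurd (t.2 0) (hPe _), ?_⟩
        funext t
        exact absurd (t.2 0) (hPe _)
      obtain ⟨k', rfl⟩ : ∃ k', k = k' + 1 := ⟨k - 1, by omega⟩
      haveI : Nonempty C := hC.to_subtype
      have hcard' : Cardinal.mk C ≤ Cardinal.mk ((Cardinal.aleph (m + 1 : ℕ)).ord.ToType) := by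
        rw [Cardinal.mk_toType, Cardinal.card_ord]
        exact hcard
      obtain ⟨emb⟩ := (Cardinal.le_def _ _).1 hcard'
      set I := (Cardinal.aleph (m + 1 : ℕ)).ord.ToType with hI
      set f : I → C := Function.invFun emb with hfdef
      have hf : Function.Surjective f := Function.invFun_surjective emb.injective
      have hubE : ∀ a b : Λ, ∃ u : Λ, a ∈ C → b ∈ C → (u ∈ C ∧ a ≤ u ∧ b ≤ u) := by
        intro a b
        by_cases ha : a ∈ C
        · by_cases hb : b ∈ C
          · obtain ⟨u, hu, h1, h2⟩ := hub a ha b hb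
            exact ⟨u, fun _ _ => ⟨hu, h1, h2⟩⟩
          · exact ⟨a, fun _ hb' => absurd hb' hb⟩
        · exact ⟨a, fun ha' => absurd ha' ha⟩
      choose ubf hubf using hubE
      have hubC : ∀ a ∈ C, ∀ b ∈ C, ubf a b ∈ C ∧ a ≤ ubf a b ∧ b ≤ ubf a b :=
        fun a ha b hb => hubf a b ha hb
      set fA : Set I → Set Λ := fun J => (fun i => ((f i : Λ))) '' J with hfA
      have hfAC : ∀ J, fA J ⊆ C := by
        rintro J a ⟨i, -, rfl⟩
        exact (f i).2
      have hfAmono : ∀ ⦃J J' : Set I⦄, J ⊆ J' → fA J ⊆ fA J' :=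
        fun J J' h => Set.image_mono h
      set MJ : Set I → Set Λ := fun J => {a | a ∈ P ∧ ∃ c ∈ Dcl ubf (fA J), a ≤ c} with hMJ
      have hMP : ∀ J, MJ J ⊆ P := fun J a ha => ha.1
      have hMmono : ∀ ⦃J J' : Set I⦄, J ⊆ J' → MJ J ⊆ MJ J' := by
        rintro J J' h a ⟨haP, c, hc, hac⟩
        exact ⟨haP, c, Dcl_mono (hfAmono h) hc, hac⟩
      have hDC : ∀ J, Dcl ubf (fA J) ⊆ C := fun J => Dcl_subset_C hubC (hfAC J)
      have hsub : ∀ J, Dcl ubf (fA J) ⊆ MJ J :=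
        fun J c hc => ⟨hCP (hDC J hc), c, hc, le_refl c⟩
      have hcofJ : ∀ J, ∀ a ∈ MJ J, ∃ c ∈ Dcl ubf (fA J), a ≤ c := fun J a ha => ha.2
      have hubJ : ∀ J, ∀ c ∈ Dcl ubf (fA J), ∀ c' ∈ Dcl ubf (fA J),
          ∃ c'' ∈ Dcl ubf (fA J), c ≤ c'' ∧ c' ≤ c'' := by
        intro J c hc c' hc'
        obtain ⟨h1, h2, h3⟩ := Dcl_ub_mem hubC (hfAC J) hc hc'
        exact ⟨ubf c c', h1, h2, h3⟩
      have hcardJ : ∀ (i : I) (J : Set I), J ⊆ Set.Iic i →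
          Cardinal.mk (Dcl ubf (fA J)) ≤ Cardinal.aleph m := by
        intro i J hJ
        have hIio : Cardinal.mk (Set.Iio i) ≤ Cardinal.aleph m := by
          have h4 : Cardinal.mk (Set.Iio i) < Cardinal.aleph (m + 1 : ℕ) :=
            Cardinal.mk_Iio_ord_toType i
          have h5 : ((m + 1 : ℕ) : Ordinal) = Order.succ (m : Ordinal) := by
            rw [← Ordinal.add_one_eq_succ]
            push_cast
            rfl
          have h6 : Cardinal.aleph ((m + 1 : ℕ) : Ordinal) =
              Order.succ (Cardinal.aleph (m : Ordinal)) := by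
            rw [h5, Cardinal.aleph_succ]
          refine Order.lt_succ_iff.1 ?_
          rw [← h6]
          exact h4
        have hIic : Cardinal.mk (Set.Iic i) ≤ Cardinal.aleph m := by
          have he : Set.Iic i = insert i (Set.Iio i) := by
            ext j
            simp [le_iff_lt_or_eq, or_comm]
          rw [he]
          calc Cardinal.mk (insert i (Set.Iio i) : Set I) ≤ Cardinal.mk (Set.Iio i) + 1 :=
                Cardinal.mk_insert_le
            _ ≤ Cardinal.aleph m + 1 := add_le_add hIio le_rfl
            _ = Cardinal.aleph m := Cardinal.add_one_eq (Cardinal.aleph0_le_aleph m)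
        calc Cardinal.mk (Dcl ubf (fA J)) ≤ max (Cardinal.mk (fA J)) Cardinal.aleph0 := Dcl_card
          _ ≤ Cardinal.aleph m := by
              refine max_le ?_ (Cardinal.aleph0_le_aleph m)
              calc Cardinal.mk (fA J) ≤ Cardinal.mk J := Cardinal.mk_image_le
                _ ≤ Cardinal.mk (Set.Iic i) := Cardinal.mk_le_mk_of_subset hJ
                _ ≤ Cardinal.aleph m := hIic
      have solveJ : ∀ (J : Set I), (∃ i : I, J ⊆ Set.Iic i) →
          ∀ kk, m ≤ kk → ∀ d : RC S (MJ J) (kk + 1), rcob S (kk + 1) d = 0 →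
            ∃ u : RC S (MJ J) kk, rcob S kk u = d := by
        rintro J ⟨i, hJi⟩ kk hkk d hd
        exact ih (MJ J) (Dcl ubf (fA J)) (hsub J) (hcofJ J) (hubJ J) (hcardJ i J hJi) kk hkk d hd
      -- Zorn
      have hzorn : ∃ m0 : PartSol S (k' + 1) x MJ hMP hMmono
          (fun J => ∀ ⦃i i' : I⦄, i ≤ i' → i' ∈ J → i ∈ J), IsMax m0 := by
        apply zorn_le
        intro ch hch
        rcases ch.eq_empty_or_nonempty with rfl | hne
        · have hMJe : ∀ a, a ∉ MJ (∅ : Set I) := by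
            rintro a ⟨-, c, hc, -⟩
            rw [show fA (∅ : Set I) = ∅ from Set.image_empty _, Dcl_empty] at hc
            exact hc
          refine ⟨⟨∅, fun i i' _ h => absurd h (Set.notMem_empty i'),
            fun t => absurd (t.2 0) (hMJe _), ?_⟩, fun a ha => absurd ha (Set.notMem_empty a)⟩
          funext t
          exact absurd (t.2 0) (hMJe _)
        · haveI : Nonempty ch := hne.to_subtype
          have hJsub : ∀ a : ch, a.1.J ⊆ ⋃ b : ch, b.1.J :=
            fun a => Set.subset_iUnion (fun b : ch => b.1.J) a
          have hdirJ : ∀ a b : ch, ∃ l : ch, a.1.J ⊆ l.1.J ∧ b.1.J ⊆ l.1.J := by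
            intro a b
            rcases eq_or_ne a.1 b.1 with he | hne2
            · exact ⟨b, by rw [he], subset_rfl⟩
            · rcases hch a.2 b.2 hne2 with h | h
              · exact ⟨b, h.1, subset_rfl⟩
              · exact ⟨a, subset_rfl, h.1⟩
          have hDclU : Dcl ubf (fA (⋃ b : ch, b.1.J)) = ⋃ b : ch, Dcl ubf (fA b.1.J) := by
            rw [show fA (⋃ b : ch, b.1.J) = ⋃ b : ch, fA b.1.J from Set.image_iUnion]
            exact Dcl_iUnion hubC _ (fun b => hfAC _)
              (fun a b => by obtain ⟨l, h1, h2⟩ := hdirJ a b; exact ⟨l, hfAmono h1, hfAmono h2⟩)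
          have hcovU : ∀ v ∈ MJ (⋃ b : ch, b.1.J), ∃ a : ch, v ∈ MJ a.1.J := by
            rintro v ⟨hvP, c, hc, hvc⟩
            rw [hDclU] at hc
            obtain ⟨a, ha⟩ := Set.mem_iUnion.1 hc
            exact ⟨a, hvP, c, ha, hvc⟩
          have hMPg : ∀ a : ch, MJ a.1.J ⊆ MJ (⋃ b : ch, b.1.J) :=
            fun a => hMmono (hJsub a)
          have hdirM : ∀ a b : ch, ∃ l : ch, MJ a.1.J ⊆ MJ l.1.J ∧ MJ b.1.J ⊆ MJ l.1.J := by
            intro a b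
            obtain ⟨l, h1, h2⟩ := hdirJ a b
            exact ⟨l, hMmono h1, hMmono h2⟩
          have hcompg : ∀ (a l : ch) (h : MJ a.1.J ⊆ MJ l.1.J),
              res S h l.1.y = a.1.y := by
            intro a l h
            rcases eq_or_ne a.1 l.1 with he | hne2
            · obtain ⟨hJ, hres⟩ := le_of_eq he
              exact hres
            · rcases hch a.2 l.2 hne2 with hle | hle
              · obtain ⟨hJ, hres⟩ := hle
                exact hres
              · obtain ⟨hJ, hres⟩ := hle
                rw [← hres]
                rfl
          obtain ⟨Y, hY, hYres⟩ := glue (ι := ch) (fun a => MJ a.1.J) hMPg hcovU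
            (fun a b => hdirM a b) (k' + 1) (res S (hMP (⋃ b : ch, b.1.J)) x)
            (fun a => a.1.y) (fun a => a.1.sol) hcompg
          refine ⟨⟨⋃ b : ch, b.1.J, ?_, Y, hY⟩, ?_⟩
          · intro i i' hle hmem
            obtain ⟨a, ha⟩ := Set.mem_iUnion.1 hmem
            exact Set.mem_iUnion.2 ⟨a, a.1.lower hle ha⟩
          · intro a ha
            exact ⟨hJsub ⟨a, ha⟩, hYres ⟨a, ha⟩⟩
      obtain ⟨m0, hm0⟩ := hzorn
      have wf : WellFounded ((· < ·) : I → I → Prop) := IsWellFounded.wf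
      by_cases hJu : m0.J = Set.univ
      · have hPM : P ⊆ MJ m0.J := by
          rw [hJu]
          intro a ha
          obtain ⟨c, hcC, hac⟩ := hcof a ha
          obtain ⟨i, hi⟩ := hf ⟨c, hcC⟩
          exact ⟨ha, c, subset_Dcl _ ⟨i, trivial, by show (f i : Λ) = c; rw [hi]⟩, hac⟩
        refine ⟨res S hPM m0.y, ?_⟩
        rw [← res_rcob, m0.sol]
        rfl
      · obtain ⟨i0, hi0⟩ := (Set.ne_univ_iff_exists_notMem _).1 hJu
        have hcne : {i : I | i ∉ m0.J}.Nonempty := ⟨i0, hi0⟩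
        set i := wf.min {i : I | i ∉ m0.J} hcne with hidef
        have himem : i ∉ m0.J := wf.min_mem _ hcne
        have hlower' : ∀ ⦃i1 i2 : I⦄, i1 ≤ i2 → i2 ∈ insert i m0.J → i1 ∈ insert i m0.J := by
          intro i1 i2 hle hmem
          rcases Set.mem_insert_iff.1 hmem with he | hmem2
          · subst he
            by_cases h1 : i1 ∈ m0.J
            · exact Set.mem_insert_iff.2 (Or.inr h1)
            · have hnlt : ¬ i1 < i := wf.not_lt_min _ h1
              exact Set.mem_insert_iff.2 (Or.inl (le_antisymm hle (not_lt.1 hnlt)))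
          · exact Set.mem_insert_iff.2 (Or.inr (m0.lower hle hmem2))
        have hJIic : insert i m0.J ⊆ Set.Iic i := by
          intro j hj
          rcases Set.mem_insert_iff.1 hj with he | hmem2
          · exact le_of_eq he
          · by_contra hnot
            exact himem (m0.lower (le_of_not_ge hnot) hmem2)
        have hJ0Iic : m0.J ⊆ Set.Iic i := (Set.subset_insert i m0.J).trans hJIic
        have hxres : rcob S (k' + 1 + 1) (res S (hMP (insert i m0.J)) x) = 0 := by
          rw [← res_rcob, hx]
          rfl
        obtain ⟨z, hz⟩ := solveJ (insert i m0.J) ⟨i, hJIic⟩ (k' + 1) (by omega) _ hxres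
        have horacle := oracle_of_solve (S := S) (hMmono (Set.subset_insert i m0.J)) k'
          (solveJ m0.J ⟨i, hJ0Iic⟩ k' (by omega))
        obtain ⟨y₁, h1, h2⟩ := correct_extend (hMmono (Set.subset_insert i m0.J)) (k' + 1)
          (res S (hMP (insert i m0.J)) x) z hz m0.y (by rw [m0.sol]; rfl) horacle
        have hle' : m0 ≤ (⟨insert i m0.J, hlower', y₁, h1⟩ :
            PartSol S (k' + 1) x MJ hMP hMmono
              (fun J => ∀ ⦃i i' : I⦄, i ≤ i' → i' ∈ J → i ∈ J)) :=
          ⟨Set.subset_insert i m0.J, h2⟩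
        obtain ⟨hsub', -⟩ := hm0 hle'
        exact absurd (hsub' (Set.mem_insert i m0.J)) himem

/-!
Statement 2 (flasque Goblot): for every `n ≥ 0`, if `G` is a flasque inverse system of
abelian groups indexed by a directed set of cofinality `ℵ_n`, then `lim^k G = 0`
for all `k ≥ n + 1`, i.e. every coherent element of `G^{(k)}` is trivial.
-/
theorem flasque_goblot [IsDirected Λ (· ≤ ·)] (n : ℕ) (S : InvSys.{u, v} Λ)
    (hflasque : ∀ {a b : Λ} (h : a ≤ b), Function.Surjective (S.p h))
    (hcof : cofinality Λ = Cardinal.aleph n) :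
    ∀ k : ℕ, n ≤ k → ∀ x : S.Cochain (k + 1), S.coboundary (k + 1) x = 0 →
      ∃ y : S.Cochain k, S.coboundary k y = x := by
  intro k hk x hx
  have hne : {c : Cardinal.{u} |
      ∃ C : Set Λ, (∀ a : Λ, ∃ b ∈ C, a ≤ b) ∧ Cardinal.mk C = c}.Nonempty :=
    ⟨Cardinal.mk (Set.univ : Set Λ), Set.univ, fun a => ⟨a, trivial, le_refl a⟩, rfl⟩
  obtain ⟨C, hCcof, hCmk⟩ := csInf_mem hne
  have hCard : Cardinal.mk C ≤ Cardinal.aleph n := by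
    rw [hCmk]
    exact le_of_eq hcof
  have hub : ∀ c ∈ C, ∀ c' ∈ C, ∃ c'' ∈ C, c ≤ c'' ∧ c' ≤ c'' := by
    intro c hc c' hc'
    obtain ⟨b, hb1, hb2⟩ := directed_of (· ≤ ·) c c'
    obtain ⟨c'', hc'', hbc⟩ := hCcof b
    exact ⟨c'', hc'', hb1.trans hbc, hb2.trans hbc⟩
  have hx'c : rcob S (k + 1) (fun t : TupIn (Set.univ : Set Λ) (k + 1) => x t.1) = 0 := by
    funext t
    exact congrFun hx t.1
  obtain ⟨y', hy'⟩ := Lmain hflasque n Set.univ C (fun c _ => trivial) (fun a _ => hCcof a)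
    hub hCard k hk (fun t => x t.1) hx'c
  refine ⟨fun t => y' ⟨t, fun _ => trivial⟩, ?_⟩
  funext t
  exact congrFun hy' ⟨t, fun _ => trivial⟩
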